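/- Let (c_{n,m})_{n,m≥0} be complex numbers with |c_{n,m}| ≤ 1 and c_{n,n} = 1, and let (ψ_m) be a sequence of unit vectors in ℓ²(ℕ), ψ_m = (d_n^{(m)})_{n≥0} with ∑_n |d_n^{(m)}|² = 1. Suppose that for every k ≥ 1, |∑_{n=0}^∞ c_{n,n+k} \overline{d_n^{(m)}} d_{n+k}^{(m)}| → 1 as m → ∞. Then for every p ∈ ℕ, ∑_{n=0}^p |d_n^{(m)}|² → 0 as m → ∞; in particular |d_n^{(m)}|² → 0 for each fixed n. -/

import Mathlib

open Filter Topology Complex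

/-- If `(c_{n,m})` satisfies `|c_{n,m}| ≤ 1`, `c_{n,n} = 1`, and the unit vectors
`ψ_m = (d_n^{(m)})` in `ℓ²` satisfy `|∑_n c_{n,n+k} conj(d_n^{(m)}) d_{n+k}^{(m)}| → 1`
for every `k ≥ 1`, then `∑_{n=0}^p |d_n^{(m)}|² → 0` for every `p`; in particular each
`|d_n^{(m)}|² → 0`. -/
theorem stmt7 (c : ℕ → ℕ → ℂ) (hc1 : ∀ n m, ‖c n m‖ ≤ 1)
    (hc2 : ∀ n, c n n = 1)
    (d : ℕ → ℕ → ℂ) (hnorm : ∀ m, ∑' n : ℕ, ‖d m n‖ ^ 2 = 1)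
    (hlim : ∀ k : ℕ, 1 ≤ k →
      Tendsto (fun m => ‖
        (∑' n : ℕ, c n (n + k) * (starRingEnd ℂ) (d m n) * d m (n + k))‖) atTop (𝓝 1)) :
    (∀ p : ℕ, Tendsto (fun m => ∑ n ∈ Finset.range (p + 1), ‖d m n‖ ^ 2) atTop (𝓝 0)) ∧
    (∀ n : ℕ, Tendsto (fun m => ‖d m n‖ ^ 2) atTop (𝓝 0)) := by
  have hsum : ∀ m, Summable (fun n => ‖d m n‖ ^ 2) := by
    intro m
    by_contra h
    have := tsum_eq_zero_of_not_summable h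
    rw [hnorm m] at this
    norm_num at this
  have key : ∀ p : ℕ, Tendsto (fun m => ∑ n ∈ Finset.range (p + 1), ‖d m n‖ ^ 2) atTop (𝓝 0) := by
    intro p
    set k := p + 1 with hk
    -- squeeze between 0 and 2 * (1 - A m)
    have h0 : ∀ m, 0 ≤ ∑ n ∈ Finset.range (p + 1), ‖d m n‖ ^ 2 := fun m =>
      Finset.sum_nonneg fun n _ => sq_nonneg _
    have hbound : ∀ m, ∑ n ∈ Finset.range (p + 1), ‖d m n‖ ^ 2 ≤
        2 * (1 - ‖∑' n : ℕ, c n (n + k) * (starRingEnd ℂ) (d m n) * d m (n + k)‖) := by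
      intro m
      have hsum2 : Summable (fun n => ‖d m (n + k)‖ ^ 2) := (hsum m).comp_injective (add_left_injective k)
      have hpt : ∀ n : ℕ, ‖c n (n + k) * (starRingEnd ℂ) (d m n) * d m (n + k)‖ ≤
          (‖d m n‖ ^ 2 + ‖d m (n + k)‖ ^ 2) / 2 := by
        intro n
        have h1 : ‖c n (n + k) * (starRingEnd ℂ) (d m n) * d m (n + k)‖ ≤ ‖d m n‖ * ‖d m (n + k)‖ := by
          rw [norm_mul, norm_mul, RCLike.norm_conj]
          have := hc1 n (n + k)
          have hd1 : (0:ℝ) ≤ ‖d m n‖ := norm_nonneg _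
          have hd2 : (0:ℝ) ≤ ‖d m (n + k)‖ := norm_nonneg _
          calc ‖c n (n + k)‖ * ‖d m n‖ * ‖d m (n + k)‖
              ≤ 1 * ‖d m n‖ * ‖d m (n + k)‖ := by
                apply mul_le_mul_of_nonneg_right (mul_le_mul_of_nonneg_right this hd1) hd2
            _ = ‖d m n‖ * ‖d m (n + k)‖ := by ring
        nlinarith [sq_nonneg (‖d m n‖ - ‖d m (n + k)‖)]
      have hsumnorm : Summable (fun n => ‖c n (n + k) * (starRingEnd ℂ) (d m n) * d m (n + k)‖) := by
        apply Summable.of_nonneg_of_le (fun n => norm_nonneg _) hpt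
        exact (((hsum m).add hsum2).div_const 2)
      have habs : ‖∑' n : ℕ, c n (n + k) * (starRingEnd ℂ) (d m n) * d m (n + k)‖ ≤
          ∑' n : ℕ, (‖d m n‖ ^ 2 + ‖d m (n + k)‖ ^ 2) / 2 := by
        calc ‖∑' n : ℕ, c n (n + k) * (starRingEnd ℂ) (d m n) * d m (n + k)‖
            = ‖∑' n : ℕ, c n (n + k) * (starRingEnd ℂ) (d m n) * d m (n + k)‖ := rfl
          _ ≤ ∑' n : ℕ, ‖c n (n + k) * (starRingEnd ℂ) (d m n) * d m (n + k)‖ :=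
              norm_tsum_le_tsum_norm hsumnorm
          _ ≤ ∑' n : ℕ, (‖d m n‖ ^ 2 + ‖d m (n + k)‖ ^ 2) / 2 :=
              Summable.tsum_le_tsum hpt hsumnorm (((hsum m).add hsum2).div_const 2)
      have htail : ∑ n ∈ Finset.range k, ‖d m n‖ ^ 2 + ∑' n : ℕ, ‖d m (n + k)‖ ^ 2 = 1 := by
        rw [Summable.sum_add_tsum_nat_add k (hsum m), hnorm m]
      have hsplit : ∑' n : ℕ, (‖d m n‖ ^ 2 + ‖d m (n + k)‖ ^ 2) / 2
          = (1 + ∑' n : ℕ, ‖d m (n + k)‖ ^ 2) / 2 := by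
        rw [tsum_div_const, Summable.tsum_add (hsum m) hsum2, hnorm m]
      rw [hsplit] at habs
      have : ∑' n : ℕ, ‖d m (n + k)‖ ^ 2 = 1 - ∑ n ∈ Finset.range k, ‖d m n‖ ^ 2 := by
        linarith
      rw [this] at habs
      rw [hk]
      linarith
    have hlim2 : Tendsto (fun m =>
        2 * (1 - ‖∑' n : ℕ, c n (n + k) * (starRingEnd ℂ) (d m n) * d m (n + k)‖))
        atTop (𝓝 0) := by
      have := (hlim k (by omega)).const_sub 1
      have h2 := this.const_mul 2
      simpa using h2
    exact squeeze_zero h0 hbound hlim2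
  refine ⟨key, fun n => ?_⟩
  have h0 : ∀ m, (0:ℝ) ≤ ‖d m n‖ ^ 2 := fun m => sq_nonneg _
  have hle : ∀ m, ‖d m n‖ ^ 2 ≤ ∑ i ∈ Finset.range (n + 1), ‖d m i‖ ^ 2 := fun m =>
    Finset.single_le_sum (fun i _ => sq_nonneg ‖d m i‖) (Finset.self_mem_range_succ n)
  exact squeeze_zero h0 hle (key n)
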